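/- The number of 5-cycle subgraphs of the Turán graph T_k(n) (with n divisible by k) equals 12·C(k,5)·(n/k)^5 + 24·C(k,4)·C(n/k,2)·(n/k)^3 + 12·C(k,3)·C(n/k,2)^2·(n/k). -/

import Mathlib

open SimpleGraph
open Fin.CommRing

noncomputable def nuC5 {V : Type*} (G : SimpleGraph V) : ℕ :=
  Nat.card {H : G.Subgraph // Nonempty (H.coe ≃g SimpleGraph.cycleGraph 5)}

namespace NuC5Aux

abbrev Cyc {V : Type*} (G : SimpleGraph V) : Type _ :=
  {f : Fin 5 → V // Function.Injective f ∧ ∀ i, G.Adj (f i) (f (i + 1))}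

variable {V : Type*} {G : SimpleGraph V}

def cycAdj (f : Fin 5 → V) (v w : V) : Prop :=
  ∃ i : Fin 5, (v = f i ∧ w = f (i + 1)) ∨ (v = f (i + 1) ∧ w = f i)

lemma cycAdj_symm {f : Fin 5 → V} {v w : V} (h : cycAdj f v w) : cycAdj f w v := by
  obtain ⟨i, h | h⟩ := h
  · exact ⟨i, Or.inr ⟨h.2, h.1⟩⟩
  · exact ⟨i, Or.inl ⟨h.2, h.1⟩⟩

def toSub (f : Cyc G) : G.Subgraph where
  verts := Set.range f.1
  Adj := cycAdj f.1
  adj_sub := by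
    rintro v w ⟨i, ⟨rfl, rfl⟩ | ⟨rfl, rfl⟩⟩
    · exact f.2.2 i
    · exact (f.2.2 i).symm
  edge_vert := by rintro v w ⟨i, ⟨rfl, rfl⟩ | ⟨rfl, rfl⟩⟩ <;> exact Set.mem_range_self _
  symm := ⟨fun v w h => cycAdj_symm h⟩

lemma cyc5_adj {i j : Fin 5} : (cycleGraph 5).Adj i j ↔ j = i + 1 ∨ i = j + 1 := by
  rw [cycleGraph_adj]
  constructor
  · rintro (h | h)
    · right; rw [← h]; ring
    · left; rw [← h]; ring
  · rintro (rfl | rfl)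
    · right; ring
    · left; ring

lemma toSub_adj (f : Cyc G) (i j : Fin 5) :
    (toSub f).Adj (f.1 i) (f.1 j) ↔ (cycleGraph 5).Adj i j := by
  rw [cyc5_adj]
  constructor
  · rintro ⟨l, ⟨h1, h2⟩ | ⟨h1, h2⟩⟩
    · obtain rfl := f.2.1 h1
      exact Or.inl (f.2.1 h2)
    · obtain rfl := f.2.1 h2
      exact Or.inr (f.2.1 h1)
  · rintro (rfl | rfl)
    · exact ⟨i, Or.inl ⟨rfl, rfl⟩⟩
    · exact ⟨j, Or.inr ⟨rfl, rfl⟩⟩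

noncomputable def cycIso (f : Cyc G) : (toSub f).coe ≃g cycleGraph 5 where
  toEquiv := (Equiv.ofInjective f.1 f.2.1).symm
  map_rel_iff' := by
    intro a b
    show (cycleGraph 5).Adj ((Equiv.ofInjective f.1 f.2.1).symm a)
      ((Equiv.ofInjective f.1 f.2.1).symm b) ↔ _
    rw [← toSub_adj f]
    rw [Equiv.apply_ofInjective_symm f.2.1 a, Equiv.apply_ofInjective_symm f.2.1 b]
    exact Iff.rfl

def Phi (G : SimpleGraph V) :
    Cyc G → {H : G.Subgraph // Nonempty (H.coe ≃g cycleGraph 5)} :=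
  fun f => ⟨toSub f, ⟨cycIso f⟩⟩

lemma Phi_surj : Function.Surjective (Phi G) := by
  rintro ⟨H, ⟨e⟩⟩
  have hinj : Function.Injective (fun i : Fin 5 => ((e.symm i : H.verts) : V)) :=
    Subtype.val_injective.comp e.symm.toEquiv.injective
  have hcadj : ∀ i : Fin 5, (cycleGraph 5).Adj i (i + 1) := fun i =>
    cyc5_adj.mpr (Or.inl rfl)
  have hadj : ∀ i : Fin 5, G.Adj ((e.symm i : H.verts) : V) ((e.symm (i + 1) : H.verts) : V) :=
    fun i => H.adj_sub (e.symm.map_rel_iff.mpr (hcadj i))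
  refine ⟨⟨fun i => ((e.symm i : H.verts) : V), hinj, hadj⟩, Subtype.ext ?_⟩
  have hverts : Set.range (fun i : Fin 5 => ((e.symm i : H.verts) : V)) = H.verts := by
    have h1 := e.symm.surjective.range_comp (Subtype.val : H.verts → V)
    rw [Subtype.range_coe] at h1
    exact h1
  refine Subgraph.ext hverts ?_
  funext v w
  apply propext
  show cycAdj _ v w ↔ H.Adj v w
  constructor
  · rintro ⟨i, ⟨rfl, rfl⟩ | ⟨rfl, rfl⟩⟩
    · exact e.symm.map_rel_iff.mpr (hcadj i)
    · exact Subgraph.adj_symm _ (e.symm.map_rel_iff.mpr (hcadj i))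
  · intro h
    have hv : v ∈ H.verts := H.edge_vert h
    have hw : w ∈ H.verts := H.edge_vert h.symm
    have h2 : (cycleGraph 5).Adj (e ⟨v, hv⟩) (e ⟨w, hw⟩) :=
      e.map_rel_iff.mpr h
    rw [cyc5_adj] at h2
    rcases h2 with h2 | h2
    · refine ⟨e ⟨v, hv⟩, Or.inl ⟨?_, ?_⟩⟩
      · exact (congrArg Subtype.val (e.symm_apply_apply ⟨v, hv⟩)).symm
      · show w = ((e.symm (e ⟨v, hv⟩ + 1) : H.verts) : V)
        rw [← h2]
        exact (congrArg Subtype.val (e.symm_apply_apply ⟨w, hw⟩)).symm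
    · refine ⟨e ⟨w, hw⟩, Or.inr ⟨?_, ?_⟩⟩
      · show v = ((e.symm (e ⟨w, hw⟩ + 1) : H.verts) : V)
        rw [← h2]
        exact (congrArg Subtype.val (e.symm_apply_apply ⟨v, hv⟩)).symm
      · exact (congrArg Subtype.val (e.symm_apply_apply ⟨w, hw⟩)).symm

abbrev Rots : Type :=
  {σ : Fin 5 → Fin 5 //
    Function.Injective σ ∧ ∀ i, σ (i + 1) = σ i + 1 ∨ σ i = σ (i + 1) + 1}

lemma hne2 : ∀ i : Fin 5, i ≠ i + 1 + 1 := by decide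

lemma fin5_cases : ∀ i : Fin 5, i = 0 ∨ i = 1 ∨ i = 2 ∨ i = 3 ∨ i = 4 := by decide

lemma rots_spec {σ : Fin 5 → Fin 5} (hinj : Function.Injective σ)
    (hstep : ∀ i, σ (i + 1) = σ i + 1 ∨ σ i = σ (i + 1) + 1) :
    (∀ i, σ i = σ 0 + i) ∨ (∀ i, σ i = σ 0 - i) := by
  have key : ∀ i, σ (i + 1) = σ i + 1 → σ (i + 1 + 1) = σ (i + 1) + 1 := by
    intro i hi
    rcases hstep (i + 1) with h | h
    · exact h
    · exact absurd (hinj (add_right_cancel (hi.symm.trans h))) (hne2 i)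
  have key' : ∀ i, σ i = σ (i + 1) + 1 → σ (i + 1) = σ (i + 1 + 1) + 1 := by
    intro i hi
    rcases hstep (i + 1) with h | h
    · exact absurd (hinj (hi.trans h.symm)) (hne2 i)
    · exact h
  rcases hstep 0 with h0 | h0
  · left
    have s1 : σ 1 = σ 0 + 1 := h0
    have s2 : σ 2 = σ 1 + 1 := key 0 s1
    have s3 : σ 3 = σ 2 + 1 := key 1 s2
    have s4 : σ 4 = σ 3 + 1 := key 2 s3
    intro i
    rcases fin5_cases i with rfl | rfl | rfl | rfl | rfl
    · simp
    · rw [s1]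
    · rw [s2, s1]; ring
    · rw [s3, s2, s1]; ring
    · rw [s4, s3, s2, s1]; ring
  · right
    have s1 : σ 0 = σ 1 + 1 := h0
    have s2 : σ 1 = σ 2 + 1 := key' 0 s1
    have s3 : σ 2 = σ 3 + 1 := key' 1 s2
    have s4 : σ 3 = σ 4 + 1 := key' 2 s3
    intro i
    rcases fin5_cases i with rfl | rfl | rfl | rfl | rfl
    · simp
    · rw [eq_sub_iff_add_eq, s1]
    · rw [eq_sub_iff_add_eq, s1, s2]; ring
    · rw [eq_sub_iff_add_eq, s1, s2, s3]; ring
    · rw [eq_sub_iff_add_eq, s1, s2, s3, s4]; ring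

noncomputable def rotsEquiv : (Fin 5 × Bool) ≃ Rots := by
  refine Equiv.ofBijective (fun p => if p.2 then
      ⟨fun i => p.1 + i, fun i j h => by simpa using h, fun i => Or.inl (by ring)⟩
    else
      ⟨fun i => p.1 - i, fun i j h => by simpa [sub_eq_sub_iff_add_eq_add] using h,
        fun i => Or.inr (by ring)⟩) ⟨?_, ?_⟩
  · rintro ⟨a, b⟩ ⟨a', b'⟩ h
    rw [Subtype.ext_iff] at h
    cases b <;> cases b' <;> simp only [if_true, if_false, Bool.false_eq_true] at h
    · have := congrFun h 0; simp at this; simp [this]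
    · exfalso
      have h1 := congrFun h 1
      have h0 := congrFun h 0
      simp only [add_zero, sub_zero] at h0
      rw [h0] at h1
      have h2 : a' - 1 = a' + 1 := h1
      rw [sub_eq_iff_eq_add] at h2
      exact hne2 a' h2
    · exfalso
      have h1 := congrFun h 1
      have h0 := congrFun h 0
      simp only [add_zero, sub_zero] at h0
      rw [h0] at h1
      have h2 : a' - 1 = a' + 1 := h1.symm
      rw [sub_eq_iff_eq_add] at h2
      exact hne2 a' h2
    · have := congrFun h 0; simp at this; simp [this]
  · rintro ⟨σ, hinj, hstep⟩
    rcases rots_spec hinj hstep with h | h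
    · exact ⟨(σ 0, true), Subtype.ext (funext fun i => (h i).symm)⟩
    · exact ⟨(σ 0, false), Subtype.ext (funext fun i => (h i).symm)⟩

lemma rots_card : Nat.card Rots = 10 := by
  rw [← Nat.card_congr rotsEquiv, Nat.card_eq_fintype_card]
  simp


def thetaFun (f : Cyc G) (σ : Rots) : Cyc G :=
  ⟨f.1 ∘ σ.1, f.2.1.comp σ.2.1, by
    intro i
    rcases σ.2.2 i with h | h
    · show G.Adj (f.1 (σ.1 i)) (f.1 (σ.1 (i + 1)))
      rw [h]
      exact f.2.2 (σ.1 i)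
    · show G.Adj (f.1 (σ.1 i)) (f.1 (σ.1 (i + 1)))
      rw [h]
      exact (f.2.2 (σ.1 (i + 1))).symm⟩

lemma theta_phi (f : Cyc G) (σ : Rots) : Phi G (thetaFun f σ) = Phi G f := by
  apply Subtype.ext
  show toSub _ = toSub f
  have hsurj : Function.Surjective σ.1 :=
    (Finite.injective_iff_bijective.mp σ.2.1).surjective
  refine Subgraph.ext ?_ ?_
  · exact hsurj.range_comp f.1
  · funext v w
    apply propext
    show cycAdj (f.1 ∘ σ.1) v w ↔ cycAdj f.1 v w
    constructor
    · rintro ⟨i, ⟨rfl, rfl⟩ | ⟨rfl, rfl⟩⟩ <;> rcases σ.2.2 i with h | h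
      · exact ⟨σ.1 i, Or.inl ⟨rfl, congrArg f.1 h⟩⟩
      · exact ⟨σ.1 (i + 1), Or.inr ⟨congrArg f.1 h, rfl⟩⟩
      · exact ⟨σ.1 i, Or.inr ⟨congrArg f.1 h, rfl⟩⟩
      · exact ⟨σ.1 (i + 1), Or.inl ⟨rfl, congrArg f.1 h⟩⟩
    · rintro ⟨l, hl⟩
      rcases rots_spec σ.2.1 σ.2.2 with hrot | href
      · have e1 : σ.1 (l - σ.1 0) = l := by rw [hrot]; ring
        have e2 : σ.1 (l - σ.1 0 + 1) = l + 1 := by rw [hrot]; ring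
        rcases hl with ⟨rfl, rfl⟩ | ⟨rfl, rfl⟩
        · exact ⟨l - σ.1 0, Or.inl ⟨(congrArg f.1 e1).symm, (congrArg f.1 e2).symm⟩⟩
        · exact ⟨l - σ.1 0, Or.inr ⟨(congrArg f.1 e2).symm, (congrArg f.1 e1).symm⟩⟩
      · have e1 : σ.1 (σ.1 0 - (l + 1)) = l + 1 := by rw [href]; ring
        have e2 : σ.1 (σ.1 0 - (l + 1) + 1) = l := by rw [href]; ring
        rcases hl with ⟨rfl, rfl⟩ | ⟨rfl, rfl⟩
        · exact ⟨σ.1 0 - (l + 1), Or.inr ⟨(congrArg f.1 e2).symm, (congrArg f.1 e1).symm⟩⟩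
        · exact ⟨σ.1 0 - (l + 1), Or.inl ⟨(congrArg f.1 e1).symm, (congrArg f.1 e2).symm⟩⟩

noncomputable def fibEquiv (f : Cyc G) : Rots ≃ {g : Cyc G // Phi G g = Phi G f} := by
  refine Equiv.ofBijective (fun σ => ⟨thetaFun f σ, theta_phi f σ⟩) ⟨?_, ?_⟩
  · intro σ σ' h
    rw [Subtype.ext_iff, Subtype.ext_iff] at h
    apply Subtype.ext
    funext i
    exact f.2.1 (congrFun h i)
  · rintro ⟨g, hPhi⟩
    have hsub : toSub g = toSub f := Subtype.ext_iff.mp hPhi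
    have hverts : Set.range g.1 = Set.range f.1 := congrArg Subgraph.verts hsub
    have hmem : ∀ i, g.1 i ∈ Set.range f.1 := fun i => hverts ▸ Set.mem_range_self i
    set σ : Fin 5 → Fin 5 :=
      fun i => (Equiv.ofInjective f.1 f.2.1).symm ⟨g.1 i, hmem i⟩ with hσ
    have hfσ : ∀ i, f.1 (σ i) = g.1 i := fun i =>
      Equiv.apply_ofInjective_symm f.2.1 ⟨g.1 i, hmem i⟩
    have hσinj : Function.Injective σ := by
      intro i j h
      apply g.2.1
      rw [← hfσ i, ← hfσ j, h]
    have hσstep : ∀ i, σ (i + 1) = σ i + 1 ∨ σ i = σ (i + 1) + 1 := by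
      intro i
      have hadjg : (toSub g).Adj (g.1 i) (g.1 (i + 1)) := ⟨i, Or.inl ⟨rfl, rfl⟩⟩
      rw [hsub] at hadjg
      obtain ⟨l, ⟨h1, h2⟩ | ⟨h1, h2⟩⟩ := hadjg
      · left
        have e1 : σ i = l := f.2.1 (by rw [hfσ i, h1])
        have e2 : σ (i + 1) = l + 1 := f.2.1 (by rw [hfσ (i + 1), h2])
        rw [e1, e2]
      · right
        have e1 : σ i = l + 1 := f.2.1 (by rw [hfσ i, h1])
        have e2 : σ (i + 1) = l := f.2.1 (by rw [hfσ (i + 1), h2])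
        rw [e1, e2]
    refine ⟨⟨σ, hσinj, hσstep⟩, ?_⟩
    apply Subtype.ext
    apply Subtype.ext
    funext i
    exact hfσ i

lemma subgraph_finite [Finite V] : Finite G.Subgraph := by
  have : Finite (Set V × (V → V → Prop)) := by infer_instance
  exact Finite.of_injective (fun H => (H.verts, H.Adj)) (by
    intro H1 H2 h
    rw [Prod.mk.injEq] at h
    exact Subgraph.ext h.1 h.2)

lemma card_cyc_eq (G : SimpleGraph V) [Finite V] :
    Nat.card (Cyc G) = nuC5 G * 10 := by
  have hfin : Finite G.Subgraph := subgraph_finite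
  have e : Cyc G ≃ ({H : G.Subgraph // Nonempty (H.coe ≃g cycleGraph 5)} × Rots) := by
    refine ((Equiv.sigmaFiberEquiv (Phi G)).symm.trans ?_).trans (Equiv.sigmaEquivProd _ _)
    refine Equiv.sigmaCongrRight fun H => ?_
    have hH := Phi_surj (G := G) H
    refine (Equiv.subtypeEquivRight fun g => ?_).trans (fibEquiv hH.choose).symm
    rw [hH.choose_spec]
  rw [Nat.card_congr e, Nat.card_prod, rots_card, nuC5]


/-! ### Part B: counting cyclic 5-tuples in the complete multipartite graph -/

abbrev MPV (k m : ℕ) := Σ _ : Fin k, Fin m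

abbrev MPG (k m : ℕ) : SimpleGraph (MPV k m) :=
  completeMultipartiteGraph fun _ : Fin k => Fin m

variable {k m : ℕ}

lemma mpg_adj {v w : MPV k m} : (MPG k m).Adj v w ↔ v.1 ≠ w.1 := Iff.rfl

lemma smk_fst {v w : MPV k m} (h : v = w) : v.1 = w.1 := congrArg Sigma.fst h

lemma smk_snd {a b : Fin k} {x y : Fin m} (h : (⟨a, x⟩ : MPV k m) = ⟨b, y⟩) : x = y :=
  eq_of_heq (Sigma.mk.inj_iff.mp h).2

lemma smk_ext {a b : Fin k} {x y : Fin m} (h1 : a = b) (h2 : x = y) :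
    (⟨a, x⟩ : MPV k m) = ⟨b, y⟩ := by subst h1; subst h2; rfl

lemma fin4_cases : ∀ i : Fin 4, i = 0 ∨ i = 1 ∨ i = 2 ∨ i = 3 := by decide
lemma fin3_cases : ∀ i : Fin 3, i = 0 ∨ i = 1 ∨ i = 2 := by decide
lemma fin2_cases : ∀ i : Fin 2, i = 0 ∨ i = 1 := by decide
lemma f5a : ∀ i : Fin 5, i ≠ i + 1 := by decide
lemma f5b : ∀ i : Fin 5, i ≠ i + 2 := by decide
lemma f5c : ∀ i : Fin 5, i + 4 + 1 = i := by decide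
lemma f5e : ∀ i : Fin 5, i - 1 = i + 4 := by decide
lemma f5f : ∀ i : Fin 5, i + 4 + 2 = i + 1 := by decide
lemma f5g : ∀ i : Fin 5, i + 3 + 2 = i := by decide
lemma f5h : ∀ i : Fin 5, i ≠ i + 3 := by decide
lemma fin5_rel : ∀ s t : Fin 5, t = s ∨ t = s + 1 ∨ t = s + 2 ∨ t = s + 3 ∨ t = s + 4 := by
  decide

abbrev P5 (k m : ℕ) := (Fin 5 ↪ Fin k) × (Fin 5 → Fin m)
abbrev P4 (k m : ℕ) := Fin 5 × (Fin 4 ↪ Fin k) × (Fin 2 ↪ Fin m) × (Fin 3 → Fin m)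
abbrev P3 (k m : ℕ) := Fin 5 × (Fin 3 ↪ Fin k) × (Fin 2 ↪ Fin m) × (Fin 2 ↪ Fin m) × Fin m

def patt4 (e : Fin 4 ↪ Fin k) (h : Fin 2 ↪ Fin m) (g : Fin 3 → Fin m) : Fin 5 → MPV k m
  | 0 => ⟨e 0, h 0⟩
  | 1 => ⟨e 1, g 0⟩
  | 2 => ⟨e 0, h 1⟩
  | 3 => ⟨e 2, g 1⟩
  | 4 => ⟨e 3, g 2⟩

def patt3 (e : Fin 3 ↪ Fin k) (h1 h2 : Fin 2 ↪ Fin m) (x : Fin m) : Fin 5 → MPV k m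
  | 0 => ⟨e 0, x⟩
  | 1 => ⟨e 1, h1 0⟩
  | 2 => ⟨e 2, h2 0⟩
  | 3 => ⟨e 1, h1 1⟩
  | 4 => ⟨e 2, h2 1⟩

lemma patt4_inj (e : Fin 4 ↪ Fin k) (h : Fin 2 ↪ Fin m) (g : Fin 3 → Fin m) :
    Function.Injective (patt4 e h g) := by
  intro s t hst
  rcases fin5_cases s with rfl|rfl|rfl|rfl|rfl <;>
    rcases fin5_cases t with rfl|rfl|rfl|rfl|rfl <;>
    simp_all [patt4, Sigma.mk.inj_iff, e.injective.eq_iff, h.injective.eq_iff]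

lemma patt3_inj (e : Fin 3 ↪ Fin k) (h1 h2 : Fin 2 ↪ Fin m) (x : Fin m) :
    Function.Injective (patt3 e h1 h2 x) := by
  intro s t hst
  rcases fin5_cases s with rfl|rfl|rfl|rfl|rfl <;>
    rcases fin5_cases t with rfl|rfl|rfl|rfl|rfl <;>
    simp_all [patt3, Sigma.mk.inj_iff, e.injective.eq_iff, h1.injective.eq_iff,
      h2.injective.eq_iff]

lemma patt4_step (e : Fin 4 ↪ Fin k) (h : Fin 2 ↪ Fin m) (g : Fin 3 → Fin m) (t : Fin 5) :
    (patt4 e h g t).1 ≠ (patt4 e h g (t + 1)).1 := by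
  rcases fin5_cases t with rfl|rfl|rfl|rfl|rfl <;> simp [patt4, e.injective.ne_iff]

lemma patt3_step (e : Fin 3 ↪ Fin k) (h1 h2 : Fin 2 ↪ Fin m) (x : Fin m) (t : Fin 5) :
    (patt3 e h1 h2 x t).1 ≠ (patt3 e h1 h2 x (t + 1)).1 := by
  rcases fin5_cases t with rfl|rfl|rfl|rfl|rfl <;> simp [patt3, e.injective.ne_iff]

lemma patt4_diag (e : Fin 4 ↪ Fin k) (h : Fin 2 ↪ Fin m) (g : Fin 3 → Fin m) (t : Fin 5) :
    (patt4 e h g t).1 = (patt4 e h g (t + 2)).1 ↔ t = 0 := by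
  rcases fin5_cases t with rfl|rfl|rfl|rfl|rfl <;> simp [patt4, e.injective.eq_iff]

lemma patt3_diag (e : Fin 3 ↪ Fin k) (h1 h2 : Fin 2 ↪ Fin m) (x : Fin m) (t : Fin 5) :
    (patt3 e h1 h2 x t).1 = (patt3 e h1 h2 x (t + 2)).1 ↔ (t = 1 ∨ t = 2) := by
  rcases fin5_cases t with rfl|rfl|rfl|rfl|rfl <;> simp [patt3, e.injective.eq_iff]

def psi5 (p : P5 k m) : Cyc (MPG k m) :=
  ⟨fun i => ⟨p.1 i, p.2 i⟩, by
    intro s t hst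
    exact p.1.injective (smk_fst hst), by
    intro i
    rw [mpg_adj]
    exact fun hh => f5a i (p.1.injective hh)⟩

def psi4 (p : P4 k m) : Cyc (MPG k m) :=
  ⟨fun j => patt4 p.2.1 p.2.2.1 p.2.2.2 (j - p.1), by
    intro s t hst
    have h2 := patt4_inj _ _ _ hst
    have h3 := congrArg (· + p.1) h2
    simpa using h3, by
    intro j
    rw [mpg_adj]
    show (patt4 p.2.1 p.2.2.1 p.2.2.2 (j - p.1)).1 ≠
      (patt4 p.2.1 p.2.2.1 p.2.2.2 (j + 1 - p.1)).1
    rw [show j + 1 - p.1 = (j - p.1) + 1 from by ring]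
    exact patt4_step p.2.1 p.2.2.1 p.2.2.2 (j - p.1)⟩

def psi3 (p : P3 k m) : Cyc (MPG k m) :=
  ⟨fun j => patt3 p.2.1 p.2.2.1 p.2.2.2.1 p.2.2.2.2 (j - p.1), by
    intro s t hst
    have h2 := patt3_inj _ _ _ _ hst
    have h3 := congrArg (· + p.1) h2
    simpa using h3, by
    intro j
    rw [mpg_adj]
    show (patt3 p.2.1 p.2.2.1 p.2.2.2.1 p.2.2.2.2 (j - p.1)).1 ≠
      (patt3 p.2.1 p.2.2.1 p.2.2.2.1 p.2.2.2.2 (j + 1 - p.1)).1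
    rw [show j + 1 - p.1 = (j - p.1) + 1 from by ring]
    exact patt3_step p.2.1 p.2.2.1 p.2.2.2.1 p.2.2.2.2 (j - p.1)⟩

lemma psi5_diag (p : P5 k m) (i : Fin 5) :
    ((psi5 p).1 i).1 ≠ ((psi5 p).1 (i + 2)).1 := by
  show p.1 i ≠ p.1 (i + 2)
  exact fun hh => f5b i (p.1.injective hh)

lemma psi4_diag (p : P4 k m) (i : Fin 5) :
    ((psi4 p).1 i).1 = ((psi4 p).1 (i + 2)).1 ↔ i = p.1 := by
  show (patt4 _ _ _ (i - p.1)).1 = (patt4 _ _ _ (i + 2 - p.1)).1 ↔ _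
  rw [show i + 2 - p.1 = (i - p.1) + 2 from by ring, patt4_diag, sub_eq_zero]

lemma psi3_diag (p : P3 k m) (i : Fin 5) :
    ((psi3 p).1 i).1 = ((psi3 p).1 (i + 2)).1 ↔ (i = p.1 + 1 ∨ i = p.1 + 2) := by
  show (patt3 _ _ _ _ (i - p.1)).1 = (patt3 _ _ _ _ (i + 2 - p.1)).1 ↔ _
  rw [show i + 2 - p.1 = (i - p.1) + 2 from by ring, patt3_diag,
    sub_eq_iff_eq_add', sub_eq_iff_eq_add']

def Psi : P5 k m ⊕ P4 k m ⊕ P3 k m → Cyc (MPG k m) :=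
  Sum.elim psi5 (Sum.elim psi4 psi3)

lemma fin5_12 : (1 : Fin 5) ≠ 2 := by decide

lemma psi_inj : Function.Injective (Psi : P5 k m ⊕ P4 k m ⊕ P3 k m → Cyc (MPG k m)) := by
  rintro (p | p | p) (q | q | q) hpq
  · -- P5 = P5
    obtain ⟨e, g⟩ := p
    obtain ⟨e', g'⟩ := q
    replace hpq : psi5 (e, g) = psi5 (e', g') := hpq
    have hf : ∀ i, (⟨e i, g i⟩ : MPV k m) = ⟨e' i, g' i⟩ := fun i =>
      congrFun (congrArg Subtype.val hpq) i
    have he : e = e' := DFunLike.ext _ _ fun i => smk_fst (hf i)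
    have hg : g = g' := funext fun i => smk_snd (hf i)
    subst he; subst hg; rfl
  · -- P5 vs P4
    exfalso
    replace hpq : psi5 p = psi4 q := hpq
    have h4 := (psi4_diag q q.1).mpr rfl
    rw [← hpq] at h4
    exact psi5_diag p q.1 h4
  · -- P5 vs P3
    exfalso
    replace hpq : psi5 p = psi3 q := hpq
    have h3 := (psi3_diag q (q.1 + 1)).mpr (Or.inl rfl)
    rw [← hpq] at h3
    exact psi5_diag p (q.1 + 1) h3
  · -- P4 vs P5
    exfalso
    replace hpq : psi4 p = psi5 q := hpq
    have h4 := (psi4_diag p p.1).mpr rfl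
    rw [hpq] at h4
    exact psi5_diag q p.1 h4
  · -- P4 = P4
    obtain ⟨a, e, h2, g⟩ := p
    obtain ⟨a', e', h2', g'⟩ := q
    replace hpq : psi4 (a, e, h2, g) = psi4 (a', e', h2', g') := hpq
    have ha : a = a' := by
      have hd := (psi4_diag (a, e, h2, g) a).mpr rfl
      rw [hpq] at hd
      exact (psi4_diag (a', e', h2', g') a).mp hd
    subst ha
    have hv : ∀ t : Fin 5, patt4 e h2 g t = patt4 e' h2' g' t := by
      intro t
      have h5 : patt4 e h2 g (a + t - a) = patt4 e' h2' g' (a + t - a) :=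
        congrFun (congrArg Subtype.val hpq) (a + t)
      rwa [add_sub_cancel_left] at h5
    have he : e = e' := by
      apply DFunLike.ext
      intro x
      rcases fin4_cases x with rfl | rfl | rfl | rfl
      · exact smk_fst (hv 0)
      · exact smk_fst (hv 1)
      · exact smk_fst (hv 3)
      · exact smk_fst (hv 4)
    have hh : h2 = h2' := by
      apply DFunLike.ext
      intro x
      rcases fin2_cases x with rfl | rfl
      · exact smk_snd (hv 0)
      · exact smk_snd (hv 2)
    have hg : g = g' := by
      funext x
      rcases fin3_cases x with rfl | rfl | rfl
      · exact smk_snd (hv 1)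
      · exact smk_snd (hv 3)
      · exact smk_snd (hv 4)
    subst he; subst hh; subst hg; rfl
  · -- P4 vs P3
    exfalso
    replace hpq : psi4 p = psi3 q := hpq
    have hd1 := (psi3_diag q (q.1 + 1)).mpr (Or.inl rfl)
    have hd2 := (psi3_diag q (q.1 + 2)).mpr (Or.inr rfl)
    rw [← hpq] at hd1 hd2
    have e1 : q.1 + 1 = p.1 := (psi4_diag p (q.1 + 1)).mp hd1
    have e2 : q.1 + 2 = p.1 := (psi4_diag p (q.1 + 2)).mp hd2
    exact fin5_12 (add_left_cancel (e1.trans e2.symm))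
  · -- P3 vs P5
    exfalso
    replace hpq : psi3 p = psi5 q := hpq
    have h3 := (psi3_diag p (p.1 + 1)).mpr (Or.inl rfl)
    rw [hpq] at h3
    exact psi5_diag q (p.1 + 1) h3
  · -- P3 vs P4
    exfalso
    replace hpq : psi3 p = psi4 q := hpq
    have hd1 := (psi3_diag p (p.1 + 1)).mpr (Or.inl rfl)
    have hd2 := (psi3_diag p (p.1 + 2)).mpr (Or.inr rfl)
    rw [hpq] at hd1 hd2
    have e1 : p.1 + 1 = q.1 := (psi4_diag q (p.1 + 1)).mp hd1
    have e2 : p.1 + 2 = q.1 := (psi4_diag q (p.1 + 2)).mp hd2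
    exact fin5_12 (add_left_cancel (e1.trans e2.symm))
  · -- P3 = P3
    obtain ⟨a, e, h1, h2, x⟩ := p
    obtain ⟨a', e', h1', h2', x'⟩ := q
    replace hpq : psi3 (a, e, h1, h2, x) = psi3 (a', e', h1', h2', x') := hpq
    have ha : a = a' := by
      have t1 := (psi3_diag (a, e, h1, h2, x) (a + 1)).mpr (Or.inl rfl)
      have t2 := (psi3_diag (a, e, h1, h2, x) (a + 2)).mpr (Or.inr rfl)
      rw [hpq] at t1 t2
      have u1 := (psi3_diag (a', e', h1', h2', x') (a + 1)).mp t1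
      have u2 := (psi3_diag (a', e', h1', h2', x') (a + 2)).mp t2
      rcases u1 with u1 | u1
      · exact add_right_cancel u1
      · rcases u2 with u2 | u2
        · exfalso
          have w1 : a = a' + 1 := by
            have : a + 1 = a' + 1 + 1 := by rw [u1]; ring
            exact add_right_cancel this
          have w2 : a' = a + 1 := by
            have : a' + 1 = a + 1 + 1 := by rw [← u2]; ring
            exact add_right_cancel this
          rw [w2] at w1
          exact hne2 a w1
        · exfalso
          have : a = a' := add_right_cancel u2
          rw [this] at u1
          exact fin5_12 (add_left_cancel u1)
    subst ha
    have hv : ∀ t : Fin 5, patt3 e h1 h2 x t = patt3 e' h1' h2' x' t := by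
      intro t
      have h5 : patt3 e h1 h2 x (a + t - a) = patt3 e' h1' h2' x' (a + t - a) :=
        congrFun (congrArg Subtype.val hpq) (a + t)
      rwa [add_sub_cancel_left] at h5
    have he : e = e' := by
      apply DFunLike.ext
      intro y
      rcases fin3_cases y with rfl | rfl | rfl
      · exact smk_fst (hv 0)
      · exact smk_fst (hv 1)
      · exact smk_fst (hv 2)
    have hh1 : h1 = h1' := by
      apply DFunLike.ext
      intro y
      rcases fin2_cases y with rfl | rfl
      · exact smk_snd (hv 1)
      · exact smk_snd (hv 3)
    have hh2 : h2 = h2' := by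
      apply DFunLike.ext
      intro y
      rcases fin2_cases y with rfl | rfl
      · exact smk_snd (hv 2)
      · exact smk_snd (hv 4)
    have hx : x = x' := smk_snd (hv 0)
    subst he; subst hh1; subst hh2; subst hx; rfl

lemma f5i : ∀ i : Fin 5, i + 2 + 2 + 1 = i := by decide
lemma f5j : ∀ i : Fin 5, i ≠ i + 4 := by decide
lemma f5k : ∀ i : Fin 5, i + 1 ≠ i + 3 := by decide
lemma f5l : ∀ i : Fin 5, i + 2 ≠ i + 4 := by decide

lemma build4 {f : Fin 5 → MPV k m} (hinj : Function.Injective f)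
    (hadjG : ∀ i, (MPG k m).Adj (f i) (f (i + 1))) (b : Fin 5)
    (hb : (f b).1 = (f (b + 2)).1)
    (hn1 : (f (b + 1)).1 ≠ (f (b + 3)).1)
    (hn4 : (f (b + 4)).1 ≠ (f (b + 1)).1) :
    ∃ p : P4 k m, psi4 p = ⟨f, hinj, hadjG⟩ := by
  have hc : ∀ i, (f i).1 ≠ (f (i + 1)).1 := fun i => mpg_adj.mp (hadjG i)
  have he : Function.Injective (fun t : Fin 4 =>
      match t with
      | 0 => (f b).1
      | 1 => (f (b + 1)).1
      | 2 => (f (b + 3)).1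
      | 3 => (f (b + 4)).1) := by
    intro s t hst
    rcases fin4_cases s with rfl | rfl | rfl | rfl <;>
      rcases fin4_cases t with rfl | rfl | rfl | rfl <;>
      simp only [] at hst ⊢
    · exact absurd hst (hc b)
    · exfalso
      apply hc (b + 2)
      rw [show b + 2 + 1 = b + 3 from by ring, ← hst, ← hb]
    · exfalso
      apply hc (b + 4)
      rw [f5c b]
      exact hst.symm
    · exact absurd hst.symm (hc b)
    · exact absurd hst hn1
    · exact absurd hst.symm hn4
    · exfalso
      apply hc (b + 2)
      rw [show b + 2 + 1 = b + 3 from by ring, hst, ← hb]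
    · exact absurd hst.symm hn1
    · exfalso
      apply hc (b + 3)
      rw [show b + 3 + 1 = b + 4 from by ring]
      exact hst
    · exfalso
      apply hc (b + 4)
      rw [f5c b]
      exact hst
    · exact absurd hst hn4
    · exfalso
      apply hc (b + 3)
      rw [show b + 3 + 1 = b + 4 from by ring]
      exact hst.symm
  have hh : Function.Injective (fun t : Fin 2 =>
      match t with
      | 0 => (f b).2
      | 1 => (f (b + 2)).2) := by
    intro s t hst
    rcases fin2_cases s with rfl | rfl <;> rcases fin2_cases t with rfl | rfl <;>
      simp only [] at hst ⊢
    · exfalso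
      apply f5b b
      apply hinj
      calc f b = ⟨(f b).1, (f b).2⟩ := rfl
        _ = ⟨(f (b + 2)).1, (f (b + 2)).2⟩ := smk_ext hb hst
        _ = f (b + 2) := rfl
    · exfalso
      apply f5b b
      apply hinj
      calc f b = ⟨(f b).1, (f b).2⟩ := rfl
        _ = ⟨(f (b + 2)).1, (f (b + 2)).2⟩ := smk_ext hb hst.symm
        _ = f (b + 2) := rfl
  refine ⟨(b, ⟨_, he⟩, ⟨_, hh⟩,
    fun t => match t with
      | 0 => (f (b + 1)).2
      | 1 => (f (b + 3)).2
      | 2 => (f (b + 4)).2), ?_⟩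
  apply Subtype.ext
  funext j
  obtain ⟨t, rfl⟩ : ∃ t, j = b + t := ⟨j - b, by ring⟩
  show patt4 _ _ _ (b + t - b) = f (b + t)
  rw [add_sub_cancel_left]
  rcases fin5_cases t with rfl | rfl | rfl | rfl | rfl
  · rw [add_zero]
    rfl
  · rfl
  · exact smk_ext hb rfl
  · rfl
  · rfl

lemma build3 {f : Fin 5 → MPV k m} (hinj : Function.Injective f)
    (hadjG : ∀ i, (MPG k m).Adj (f i) (f (i + 1))) (b : Fin 5)
    (hb1 : (f (b + 1)).1 = (f (b + 3)).1)
    (hb2 : (f (b + 2)).1 = (f (b + 4)).1) :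
    ∃ p : P3 k m, psi3 p = ⟨f, hinj, hadjG⟩ := by
  have hc : ∀ i, (f i).1 ≠ (f (i + 1)).1 := fun i => mpg_adj.mp (hadjG i)
  have he : Function.Injective (fun t : Fin 3 =>
      match t with
      | 0 => (f b).1
      | 1 => (f (b + 1)).1
      | 2 => (f (b + 2)).1) := by
    intro s t hst
    rcases fin3_cases s with rfl | rfl | rfl <;> rcases fin3_cases t with rfl | rfl | rfl <;>
      simp only [] at hst ⊢
    · exact absurd hst (hc b)
    · exfalso
      apply hc (b + 4)
      rw [f5c b, ← hb2, ← hst]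
    · exact absurd hst.symm (hc b)
    · exfalso
      apply hc (b + 1)
      rw [show b + 1 + 1 = b + 2 from by ring]
      exact hst
    · exfalso
      apply hc (b + 4)
      rw [f5c b, ← hb2]
      exact hst
    · exfalso
      apply hc (b + 1)
      rw [show b + 1 + 1 = b + 2 from by ring]
      exact hst.symm
  have hh1 : Function.Injective (fun t : Fin 2 =>
      match t with
      | 0 => (f (b + 1)).2
      | 1 => (f (b + 3)).2) := by
    intro s t hst
    rcases fin2_cases s with rfl | rfl <;> rcases fin2_cases t with rfl | rfl <;>
      simp only [] at hst ⊢
    · exact absurd (hinj (calc f (b + 1) = ⟨(f (b + 1)).1, (f (b + 1)).2⟩ := rfl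
        _ = ⟨(f (b + 3)).1, (f (b + 3)).2⟩ := smk_ext hb1 hst
        _ = f (b + 3) := rfl)) (f5k b)
    · exact absurd (hinj (calc f (b + 1) = ⟨(f (b + 1)).1, (f (b + 1)).2⟩ := rfl
        _ = ⟨(f (b + 3)).1, (f (b + 3)).2⟩ := smk_ext hb1 hst.symm
        _ = f (b + 3) := rfl)) (f5k b)
  have hh2 : Function.Injective (fun t : Fin 2 =>
      match t with
      | 0 => (f (b + 2)).2
      | 1 => (f (b + 4)).2) := by
    intro s t hst
    rcases fin2_cases s with rfl | rfl <;> rcases fin2_cases t with rfl | rfl <;>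
      simp only [] at hst ⊢
    · exact absurd (hinj (calc f (b + 2) = ⟨(f (b + 2)).1, (f (b + 2)).2⟩ := rfl
        _ = ⟨(f (b + 4)).1, (f (b + 4)).2⟩ := smk_ext hb2 hst
        _ = f (b + 4) := rfl)) (f5l b)
    · exact absurd (hinj (calc f (b + 2) = ⟨(f (b + 2)).1, (f (b + 2)).2⟩ := rfl
        _ = ⟨(f (b + 4)).1, (f (b + 4)).2⟩ := smk_ext hb2 hst.symm
        _ = f (b + 4) := rfl)) (f5l b)
  refine ⟨(b, ⟨_, he⟩, ⟨_, hh1⟩, ⟨_, hh2⟩, (f b).2), ?_⟩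
  apply Subtype.ext
  funext j
  obtain ⟨t, rfl⟩ : ∃ t, j = b + t := ⟨j - b, by ring⟩
  show patt3 _ _ _ _ (b + t - b) = f (b + t)
  rw [add_sub_cancel_left]
  rcases fin5_cases t with rfl | rfl | rfl | rfl | rfl
  · rw [add_zero]
    rfl
  · rfl
  · rfl
  · exact smk_ext hb1 rfl
  · exact smk_ext hb2 rfl

lemma psi_surj : Function.Surjective (Psi : P5 k m ⊕ P4 k m ⊕ P3 k m → Cyc (MPG k m)) := by
  rintro ⟨f, hinj, hadjG⟩
  have hc : ∀ i, (f i).1 ≠ (f (i + 1)).1 := fun i => mpg_adj.mp (hadjG i)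
  by_cases hD : ∀ i : Fin 5, (f i).1 ≠ (f (i + 2)).1
  · have hcinj : Function.Injective (fun i => (f i).1) := by
      intro s t hst
      simp only [] at hst
      rcases fin5_rel s t with rfl | rfl | rfl | rfl | rfl
      · rfl
      · exact absurd hst (hc s)
      · exact absurd hst (hD s)
      · exact absurd (by rw [f5g s]; exact hst.symm) (hD (s + 3))
      · exact absurd (by rw [f5c s]; exact hst.symm) (hc (s + 4))
    refine ⟨Sum.inl (⟨fun i => (f i).1, hcinj⟩, fun i => (f i).2), ?_⟩
    apply Subtype.ext
    funext j
    rfl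
  · push_neg at hD
    obtain ⟨a, ha⟩ := hD
    by_cases h1 : (f (a + 1)).1 = (f (a + 1 + 2)).1
    · -- two diagonals a, a+1 : use P3 anchored at a - 1
      obtain ⟨p, hp⟩ := build3 hinj hadjG (a - 1)
        (by rw [show a - 1 + 1 = a from by ring, show a - 1 + 3 = a + 2 from by ring]; exact ha)
        (by rw [show a - 1 + 2 = a + 1 from by ring, show a - 1 + 4 = a + 1 + 2 from by ring]
            exact h1)
      exact ⟨Sum.inr (Sum.inr p), hp⟩
    · by_cases h4 : (f (a + 4)).1 = (f (a + 4 + 2)).1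
      · -- diagonals a - 1, a : use P3 anchored at a - 2
        obtain ⟨p, hp⟩ := build3 hinj hadjG (a - 2)
          (by rw [show a - 2 + 1 = a + 4 from by rw [← f5e]; ring,
                show a - 2 + 3 = a + 4 + 2 from by rw [f5f]; ring]
              exact h4)
          (by rw [show a - 2 + 2 = a from by ring, show a - 2 + 4 = a + 2 from by ring]
              exact ha)
        exact ⟨Sum.inr (Sum.inr p), hp⟩
      · -- only diagonal a : use P4 anchored at a
        obtain ⟨p, hp⟩ := build4 hinj hadjG a ha
          (by rw [show a + 3 = a + 1 + 2 from by ring]; exact h1)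
          (by rw [show (f (a + 1)).1 = (f (a + 4 + 2)).1 from by rw [f5f]]; exact h4)
        exact ⟨Sum.inr (Sum.inl p), hp⟩

set_option maxHeartbeats 1000000 in
lemma card_cyc_mpg :
    Nat.card (Cyc (MPG k m)) =
      k.descFactorial 5 * m ^ 5 + 5 * k.descFactorial 4 * m.descFactorial 2 * m ^ 3
        + 5 * k.descFactorial 3 * m.descFactorial 2 ^ 2 * m := by
  have hb : Function.Bijective (Psi : P5 k m ⊕ P4 k m ⊕ P3 k m → Cyc (MPG k m)) :=
    ⟨psi_inj, psi_surj⟩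
  rw [← Nat.card_eq_of_bijective _ hb]
  rw [Nat.card_eq_fintype_card]
  simp [Fintype.card_sum, Fintype.card_prod, Fintype.card_fun, Fintype.card_embedding_eq]
  ring
end NuC5Aux

/-- The number of 5-cycle subgraphs of the Turán graph `T_k(n)` with `n = k * m`, i.e. the
complete balanced `k`-partite graph with all parts of size `m`. -/
theorem stmt_13 (k m : ℕ) :
    nuC5 (SimpleGraph.completeMultipartiteGraph (fun _ : Fin k => Fin m)) =
      12 * k.choose 5 * m ^ 5 + 24 * k.choose 4 * m.choose 2 * m ^ 3
        + 12 * k.choose 3 * (m.choose 2) ^ 2 * m := by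
  have h1 := NuC5Aux.card_cyc_eq (NuC5Aux.MPG k m)
  have h2 := NuC5Aux.card_cyc_mpg (k := k) (m := m)
  have h3 : nuC5 (NuC5Aux.MPG k m) * 10 =
      (12 * k.choose 5 * m ^ 5 + 24 * k.choose 4 * m.choose 2 * m ^ 3
        + 12 * k.choose 3 * (m.choose 2) ^ 2 * m) * 10 := by
    rw [← h1, h2]
    simp only [Nat.descFactorial_eq_factorial_mul_choose, Nat.factorial]
    ring
  exact Nat.eq_of_mul_eq_mul_right (by norm_num) h3
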